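/- arXiv:1605.07046 — 2 statements merged into one kernel-verified Lean document; each statement's English description precedes it below -/
import Mathlib

section
/- Suppose for every 0 ≤ m ≤ N/L−1 the R × L matrix A_m = (β_r(m + jN/L))_{1≤r≤R, 0≤j≤L−1} has rank L. Then the magnitudes |x(n)|, 0 ≤ n ≤ N−1, of any signal x ∈ ℂ^N are uniquely determined by the magnitude measurements |X_{w_r}(Lm,k)| (1 ≤ r ≤ R, 0 ≤ m ≤ N/L−1, 0 ≤ k ≤ N−1) of its multiple-window STFT. That is, if y ∈ ℂ^N has the same magnitude measurements as x, then |y(n)| = |x(n)| for all n. -/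
/-- Multiple-window short-time Fourier transform. -/
noncomputable def stft {N : ℕ} [NeZero N] (L : ℕ) (x w : ZMod N → ℂ) (m k : ℕ) : ℂ :=
  (N : ℂ)⁻¹ * ∑ n : ZMod N, x n * w (((L * m : ℕ) : ZMod N) - n) *
    Complex.exp (-(2 * Real.pi * Complex.I * (k : ℂ) * (n.val : ℂ)) / (N : ℂ))

/-- DFT of the squared magnitudes of a vector: `(1/N) ∑_n |u(n)|² e^{-2πikn/N}`. -/
noncomputable def dftSq {N : ℕ} [NeZero N] (u : ZMod N → ℂ) (k : ℕ) : ℂ :=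
  (N : ℂ)⁻¹ * ∑ n : ZMod N, (‖u n‖ ^ 2 : ℝ) *
    Complex.exp (-(2 * Real.pi * Complex.I * (k : ℂ) * (n.val : ℂ)) / (N : ℂ))

/-! Auxiliary lemmas -/

noncomputable def Ee (N : ℕ) (a : ℤ) : ℂ := Complex.exp (2 * Real.pi * Complex.I * a / N)

lemma Ee_add (N : ℕ) (a b : ℤ) : Ee N (a + b) = Ee N a * Ee N b := by
  rw [Ee, Ee, Ee, ← Complex.exp_add]
  congr 1
  push_cast
  ring

lemma Ee_zero (N : ℕ) : Ee N 0 = 1 := by simp [Ee]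

lemma Ee_nmul (N : ℕ) (c : ℤ) : Ee N ((N : ℤ) * c) = 1 := by
  rcases eq_or_ne N 0 with rfl | h
  · simp [Ee]
  · rw [Ee]
    have : 2 * (Real.pi : ℂ) * Complex.I * ((N : ℤ) * c : ℤ) / N = (c : ℂ) * (2 * Real.pi * Complex.I) := by
      have hN : (N : ℂ) ≠ 0 := by exact_mod_cast h
      push_cast
      field_simp
    rw [this, Complex.exp_int_mul_two_pi_mul_I]

lemma Ee_congr (N : ℕ) {a b : ℤ} (h : (N : ℤ) ∣ (a - b)) : Ee N a = Ee N b := by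
  rcases h with ⟨c, hc⟩
  have : a = b + (N : ℤ) * c := by linarith
  rw [this, Ee_add, Ee_nmul, mul_one]

lemma Ee_pow (N : ℕ) (a : ℤ) (k : ℕ) : Ee N a ^ k = Ee N (a * k) := by
  rw [Ee, Ee, ← Complex.exp_nat_mul]
  congr 1
  push_cast
  ring

lemma Ee_conj (N : ℕ) (a : ℤ) : (starRingEnd ℂ) (Ee N a) = Ee N (-a) := by
  rw [Ee, Ee, ← Complex.exp_conj]
  congr 1
  simp only [map_div₀, map_mul, map_neg, Complex.conj_I, Complex.conj_ofReal, map_ofNat,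
    map_intCast, map_natCast]
  push_cast
  ring

lemma Ee_ne_one (N : ℕ) (hN : 0 < N) {d : ℤ} (h : ¬ (N : ℤ) ∣ d) : Ee N d ≠ 1 := by
  rw [Ee]
  intro hone
  rw [Complex.exp_eq_one_iff] at hone
  obtain ⟨n, hn⟩ := hone
  apply h
  refine ⟨n, ?_⟩
  have hN' : (N : ℂ) ≠ 0 := by exact_mod_cast hN.ne'
  have hπ : (Real.pi : ℂ) ≠ 0 := by exact_mod_cast Real.pi_ne_zero
  have hI := Complex.I_ne_zero
  field_simp at hn
  have : (d : ℂ) = (N : ℂ) * n := by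
    have h2 : (2 : ℂ) ≠ 0 := two_ne_zero
    apply mul_left_cancel₀ (mul_ne_zero (mul_ne_zero h2 hπ) hI)
    ring_nf
    ring_nf at hn
    linear_combination (2 * (Real.pi : ℂ) * Complex.I) * hn
  exact_mod_cast this

lemma orth (M : ℕ) (hM : 0 < M) (d : ℤ) :
    ∑ k ∈ Finset.range M, Ee M (k * d) = if (M : ℤ) ∣ d then (M : ℂ) else 0 := by
  have h1 : ∀ k : ℕ, Ee M (k * d) = (Ee M d) ^ k := by
    intro k; rw [Ee_pow]; congr 1; ring
  simp only [h1]
  split_ifs with h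
  · have : Ee M d = 1 := by
      rw [show (1 : ℂ) = Ee M 0 from (Ee_zero M).symm]
      exact Ee_congr M (by simpa using h)
    simp [this]
  · have hne : Ee M d ≠ 1 := Ee_ne_one M hM h
    rw [geom_sum_eq hne]
    have : Ee M d ^ M = 1 := by
      rw [Ee_pow]
      rw [show (1 : ℂ) = Ee M 0 from (Ee_zero M).symm]
      exact Ee_congr M ⟨d, by ring⟩
    rw [this]
    simp

lemma zmod_dvd_iff (N : ℕ) [NeZero N] (n n' : ZMod N) :
    (N : ℤ) ∣ ((n.val : ℤ) - (n'.val : ℤ)) ↔ n = n' := by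
  rw [← ZMod.intCast_zmod_eq_zero_iff_dvd]
  push_cast
  rw [ZMod.natCast_val, ZMod.natCast_val, ZMod.cast_id, ZMod.cast_id, sub_eq_zero]

lemma val_add_dvd (N : ℕ) [NeZero N] (t n : ZMod N) :
    (N : ℤ) ∣ (((t.val : ℤ) + (n.val : ℤ)) - ((t + n).val : ℤ)) := by
  rw [← ZMod.intCast_zmod_eq_zero_iff_dvd]
  push_cast
  simp [ZMod.natCast_val, ZMod.cast_id]

lemma Lm_split {N : ℕ} [NeZero N] (L m : ℕ) (n : ZMod N) :
    (N : ℤ) ∣ ((L * m : ℕ) : ℤ) - (((((L * m : ℕ) : ZMod N) - n).val : ℤ) + (n.val : ℤ)) := by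
  rw [← ZMod.intCast_zmod_eq_zero_iff_dvd]
  push_cast
  simp [ZMod.natCast_val, ZMod.cast_id]

lemma EeL_to_N {N L : ℕ} [NeZero N] (hL : 0 < L) (hdvd : L ∣ N) (a : ℤ) :
    Ee L a = Ee N (a * (N / L : ℕ)) := by
  rw [Ee, Ee]
  congr 1
  have hNL : (L : ℂ) * ((N / L : ℕ) : ℂ) = (N : ℂ) := by
    exact_mod_cast congrArg (Nat.cast : ℕ → ℂ) (Nat.mul_div_cancel' hdvd)
  have hL0 : (L : ℂ) ≠ 0 := Nat.cast_ne_zero.mpr hL.ne'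
  have hd0 : ((N / L : ℕ) : ℂ) ≠ 0 := by
    have : 0 < N / L := Nat.div_pos (Nat.le_of_dvd (Nat.pos_of_ne_zero (NeZero.ne N)) hdvd) hL
    exact_mod_cast this.ne'
  rw [← hNL, div_eq_div_iff hL0 (mul_ne_zero hL0 hd0)]
  simp only [Int.cast_mul, Int.cast_natCast]
  ring

lemma reindex {N L : ℕ} [NeZero N] (hL : 0 < L) (hdvd : L ∣ N) (F : ZMod N → ℂ) (n : ZMod N) :
    ∑ m ∈ Finset.range (N / L), F (((L * m : ℕ) : ZMod N) - n)
    = ∑ t : ZMod N, (if L ∣ (t + n).val then (1 : ℂ) else 0) * F t := by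
  classical
  have hN : 0 < N := Nat.pos_of_ne_zero (NeZero.ne N)
  simp only [ite_mul, one_mul, zero_mul]
  rw [← Finset.sum_filter]
  refine Finset.sum_nbij' (fun m => ((L * m : ℕ) : ZMod N) - n)
    (fun t => (t + n).val / L) ?_ ?_ ?_ ?_ ?_
  · intro m hm
    simp only [Finset.mem_filter, Finset.mem_univ, true_and]
    rw [sub_add_cancel, ZMod.val_natCast]
    exact (Nat.dvd_mod_iff hdvd).mpr ⟨m, rfl⟩
  · intro t ht
    simp only [Finset.mem_filter, Finset.mem_univ, true_and] at ht
    rw [Finset.mem_range]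
    exact Nat.div_lt_div_of_lt_of_dvd hdvd (ZMod.val_lt _)
  · intro m hm
    rw [Finset.mem_range] at hm
    have hlt : L * m < N := (Nat.lt_div_iff_mul_lt' hdvd m).mp hm
    rw [sub_add_cancel, ZMod.val_natCast, Nat.mod_eq_of_lt hlt,
      Nat.mul_div_cancel_left m hL]
  · intro t ht
    simp only [Finset.mem_filter, Finset.mem_univ, true_and] at ht
    rw [Nat.mul_div_cancel' ht]
    have : (((t + n).val : ℕ) : ZMod N) = t + n := by
      simp [ZMod.natCast_val, ZMod.cast_id]
    rw [this, add_sub_cancel_right]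
  · intro m hm
    rfl

lemma pointfact {N L : ℕ} [NeZero N] (hL : 0 < L) (hdvd : L ∣ N) (j p : ℕ) (t n : ZMod N) :
    Ee L ((j : ℤ) * (-(((t + n).val : ℤ)))) *
      (Ee N (-((p : ℤ) * (t.val : ℤ))) * Ee N (-((p : ℤ) * (n.val : ℤ))))
    = Ee N (-(((p + j * (N / L) : ℕ) : ℤ) * (t.val : ℤ))) *
      Ee N (-(((p + j * (N / L) : ℕ) : ℤ) * (n.val : ℤ))) := by
  have hsplit : Ee L ((j : ℤ) * (-(((t + n).val : ℤ))))
      = Ee L (-((j : ℤ) * (t.val : ℤ))) * Ee L (-((j : ℤ) * (n.val : ℤ))) := by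
    rw [← Ee_add]
    apply Ee_congr
    have h2 : (j : ℤ) * (-(((t + n).val : ℤ))) - (-((j : ℤ) * (t.val : ℤ)) + -((j : ℤ) * (n.val : ℤ)))
        = (j : ℤ) * (((t.val : ℤ) + (n.val : ℤ)) - ((t + n).val : ℤ)) := by ring
    rw [h2]
    exact Dvd.dvd.mul_left
      (dvd_trans (Int.natCast_dvd_natCast.mpr hdvd) (val_add_dvd N t n)) _
  rw [hsplit, EeL_to_N hL hdvd, EeL_to_N hL hdvd, ← Ee_add, ← Ee_add, ← Ee_add, ← Ee_add]
  congr 1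
  push_cast
  ring

lemma step2 {N L : ℕ} [NeZero N] (hL : 0 < L) (hdvd : L ∣ N) (g u : ZMod N → ℂ) (p : ℕ) :
    ∑ m ∈ Finset.range (N / L),
      (∑ n : ZMod N, u n * g (((L * m : ℕ) : ZMod N) - n)) * Ee N (-((p : ℤ) * ((L * m : ℕ) : ℤ)))
    = (L : ℂ)⁻¹ * ∑ j ∈ Finset.range L,
        (∑ t : ZMod N, g t * Ee N (-(((p + j * (N / L) : ℕ) : ℤ) * (t.val : ℤ)))) *
        (∑ n : ZMod N, u n * Ee N (-(((p + j * (N / L) : ℕ) : ℤ) * (n.val : ℤ)))) := by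
  classical
  have hL0 : (L : ℂ) ≠ 0 := Nat.cast_ne_zero.mpr hL.ne'
  have hind : ∀ s : ℕ, (if L ∣ s then (1 : ℂ) else 0)
      = (L : ℂ)⁻¹ * ∑ j ∈ Finset.range L, Ee L ((j : ℤ) * (-(s : ℤ))) := by
    intro s
    rw [orth L hL (-(s : ℤ))]
    simp only [dvd_neg, Int.natCast_dvd_natCast]
    split_ifs with h
    · rw [inv_mul_cancel₀ hL0]
    · rw [mul_zero]
  have hA : ∑ m ∈ Finset.range (N / L),
      (∑ n : ZMod N, u n * g (((L * m : ℕ) : ZMod N) - n)) * Ee N (-((p : ℤ) * ((L * m : ℕ) : ℤ)))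
      = ∑ n : ZMod N, ∑ m ∈ Finset.range (N / L),
          u n * g (((L * m : ℕ) : ZMod N) - n) *
            (Ee N (-((p : ℤ) * (((((L * m : ℕ) : ZMod N) - n)).val : ℤ))) *
             Ee N (-((p : ℤ) * (n.val : ℤ)))) := by
    rw [Finset.sum_comm]
    refine Finset.sum_congr rfl fun m _ => ?_
    rw [Finset.sum_mul]
    refine Finset.sum_congr rfl fun n _ => ?_
    have hE : Ee N (-((p : ℤ) * ((L * m : ℕ) : ℤ)))
        = Ee N (-((p : ℤ) * (((((L * m : ℕ) : ZMod N) - n)).val : ℤ))) *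
          Ee N (-((p : ℤ) * (n.val : ℤ))) := by
      rw [← Ee_add]
      apply Ee_congr
      have h2 : -((p : ℤ) * ((L * m : ℕ) : ℤ)) -
          (-((p : ℤ) * (((((L * m : ℕ) : ZMod N) - n)).val : ℤ)) + -((p : ℤ) * (n.val : ℤ)))
          = (-(p : ℤ)) * (((L * m : ℕ) : ℤ) -
              ((((((L * m : ℕ) : ZMod N) - n)).val : ℤ) + (n.val : ℤ))) := by ring
      rw [h2]
      exact Dvd.dvd.mul_left (Lm_split L m n) _
    rw [hE]
  rw [hA]
  have hB : ∀ n : ZMod N, ∑ m ∈ Finset.range (N / L),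
      u n * g (((L * m : ℕ) : ZMod N) - n) *
        (Ee N (-((p : ℤ) * (((((L * m : ℕ) : ZMod N) - n)).val : ℤ))) *
         Ee N (-((p : ℤ) * (n.val : ℤ))))
      = ∑ t : ZMod N, (if L ∣ (t + n).val then (1 : ℂ) else 0) *
          (u n * g t * (Ee N (-((p : ℤ) * (t.val : ℤ))) * Ee N (-((p : ℤ) * (n.val : ℤ))))) := by
    intro n
    exact reindex hL hdvd
      (fun t => u n * g t * (Ee N (-((p : ℤ) * (t.val : ℤ))) * Ee N (-((p : ℤ) * (n.val : ℤ))))) n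
  rw [Finset.sum_congr rfl fun n _ => hB n]
  have hC : ∀ n t : ZMod N, (if L ∣ (t + n).val then (1 : ℂ) else 0) *
      (u n * g t * (Ee N (-((p : ℤ) * (t.val : ℤ))) * Ee N (-((p : ℤ) * (n.val : ℤ)))))
      = (L : ℂ)⁻¹ * ∑ j ∈ Finset.range L,
          (g t * Ee N (-(((p + j * (N / L) : ℕ) : ℤ) * (t.val : ℤ)))) *
          (u n * Ee N (-(((p + j * (N / L) : ℕ) : ℤ) * (n.val : ℤ)))) := by
    intro n t
    rw [hind ((t + n).val), mul_assoc, Finset.sum_mul]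
    congr 1
    refine Finset.sum_congr rfl fun j _ => ?_
    have hp := pointfact hL hdvd j p t n
    linear_combination (g t * u n) * hp
  rw [Finset.sum_congr rfl fun n _ => Finset.sum_congr rfl fun t _ => hC n t]
  simp only [← Finset.mul_sum]
  congr 1
  rw [Finset.sum_comm]
  rw [Finset.sum_congr rfl fun t (_ : t ∈ Finset.univ) => Finset.sum_comm]
  rw [Finset.sum_comm]
  refine Finset.sum_congr rfl fun j _ => ?_
  exact (Finset.sum_mul_sum _ _ _ _).symm

lemma rank_inj {R L : ℕ} (A : Matrix (Fin R) (Fin L) ℂ) (h : A.rank = L)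
    (v : Fin L → ℂ) (hv : A.mulVec v = 0) : v = 0 := by
  have hker : LinearMap.ker A.mulVecLin = ⊥ := by
    have h2 := LinearMap.finrank_range_add_finrank_ker A.mulVecLin
    rw [Module.finrank_fintype_fun_eq_card, Fintype.card_fin] at h2
    have h3 : Module.finrank ℂ (LinearMap.range A.mulVecLin) = L := h
    have h4 : Module.finrank ℂ (LinearMap.ker A.mulVecLin) = 0 := by omega
    exact Submodule.finrank_eq_zero.mp h4
  have : v ∈ LinearMap.ker A.mulVecLin := by
    rw [LinearMap.mem_ker, Matrix.mulVecLin_apply, hv]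
  rw [hker, Submodule.mem_bot] at this
  exact this

lemma inv_dft {N : ℕ} [NeZero N] (c : ZMod N → ℂ) (n : ZMod N) :
    ∑ k ∈ Finset.range N, ((N : ℂ)⁻¹ * ∑ n' : ZMod N, c n' * Ee N (-((k : ℤ) * (n'.val : ℤ)))) *
      Ee N ((k : ℤ) * (n.val : ℤ)) = c n := by
  have hN : 0 < N := Nat.pos_of_ne_zero (NeZero.ne N)
  have hNC : (N : ℂ) ≠ 0 := Nat.cast_ne_zero.mpr hN.ne'
  have h1 : ∀ k ∈ Finset.range N,
      ((N : ℂ)⁻¹ * ∑ n' : ZMod N, c n' * Ee N (-((k : ℤ) * (n'.val : ℤ)))) *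
        Ee N ((k : ℤ) * (n.val : ℤ))
      = ∑ n' : ZMod N, (N : ℂ)⁻¹ * (c n' * Ee N ((k : ℤ) * ((n.val : ℤ) - (n'.val : ℤ)))) := by
    intro k _
    rw [mul_assoc, Finset.sum_mul, Finset.mul_sum]
    refine Finset.sum_congr rfl fun n' _ => ?_
    rw [mul_assoc, ← Ee_add]
    congr 2
    ring
  rw [Finset.sum_congr rfl h1, Finset.sum_comm]
  have h2 : ∀ n' : ZMod N,
      ∑ k ∈ Finset.range N, (N : ℂ)⁻¹ * (c n' * Ee N ((k : ℤ) * ((n.val : ℤ) - (n'.val : ℤ))))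
      = (N : ℂ)⁻¹ * (c n' * if n = n' then (N : ℂ) else 0) := by
    intro n'
    rw [← Finset.mul_sum, ← Finset.mul_sum, orth N hN]
    simp only [zmod_dvd_iff]
  rw [Finset.sum_congr rfl fun n' _ => h2 n']
  simp only [mul_ite, mul_zero, Finset.sum_ite_eq, Finset.mem_univ, if_true]
  field_simp

lemma exp_eq_Ee (N k : ℕ) (n : ZMod N) :
    Complex.exp (-(2 * Real.pi * Complex.I * (k : ℂ) * (n.val : ℂ)) / (N : ℂ))
      = Ee N (-((k : ℤ) * (n.val : ℤ))) := by
  rw [Ee]; congr 1; push_cast; ring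

lemma stft_eq {N : ℕ} [NeZero N] (L : ℕ) (z W : ZMod N → ℂ) (m k : ℕ) :
    stft L z W m k = (N : ℂ)⁻¹ * ∑ n : ZMod N,
      z n * W (((L * m : ℕ) : ZMod N) - n) * Ee N (-((k : ℤ) * (n.val : ℤ))) := by
  rw [stft]
  congr 1
  exact Finset.sum_congr rfl fun n _ => by rw [exp_eq_Ee]

lemma dftSq_eq {N : ℕ} [NeZero N] (u : ZMod N → ℂ) (k : ℕ) :
    dftSq u k = (N : ℂ)⁻¹ * ∑ n : ZMod N,
      ((‖u n‖ ^ 2 : ℝ) : ℂ) * Ee N (-((k : ℤ) * (n.val : ℤ))) := by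
  rw [dftSq]
  congr 1
  exact Finset.sum_congr rfl fun n _ => by rw [exp_eq_Ee]

lemma normsq_cast (c : ℂ) : ((‖c‖ ^ 2 : ℝ) : ℂ) = c * (starRingEnd ℂ) c := by
  rw [Complex.mul_conj, Complex.normSq_eq_norm_sq]

lemma parseval' {N : ℕ} [NeZero N] (f : ZMod N → ℂ) :
    ∑ k ∈ Finset.range N, ((∑ n : ZMod N, f n * Ee N (-((k : ℤ) * (n.val : ℤ)))) *
      (starRingEnd ℂ) (∑ n : ZMod N, f n * Ee N (-((k : ℤ) * (n.val : ℤ)))))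
      = (N : ℂ) * ∑ n : ZMod N, f n * (starRingEnd ℂ) (f n) := by
  have hN : 0 < N := Nat.pos_of_ne_zero (NeZero.ne N)
  have step : ∀ k ∈ Finset.range N,
      ((∑ n : ZMod N, f n * Ee N (-((k : ℤ) * (n.val : ℤ)))) *
        (starRingEnd ℂ) (∑ n : ZMod N, f n * Ee N (-((k : ℤ) * (n.val : ℤ)))))
      = ∑ n : ZMod N, ∑ n' : ZMod N,
          f n * (starRingEnd ℂ) (f n') * Ee N ((k : ℤ) * ((n'.val : ℤ) - (n.val : ℤ))) := by
    intro k _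
    rw [map_sum, Finset.sum_mul_sum]
    refine Finset.sum_congr rfl fun n _ => Finset.sum_congr rfl fun n' _ => ?_
    rw [map_mul, Ee_conj]
    rw [show ((k : ℤ) * ((n'.val : ℤ) - (n.val : ℤ))) = (-((k : ℤ) * (n.val : ℤ))) + (-(-((k : ℤ) * (n'.val : ℤ)))) by ring, Ee_add]
    ring
  rw [Finset.sum_congr rfl step, Finset.sum_comm]
  have inner : ∀ n : ZMod N,
      ∑ k ∈ Finset.range N, ∑ n' : ZMod N,
        f n * (starRingEnd ℂ) (f n') * Ee N ((k : ℤ) * ((n'.val : ℤ) - (n.val : ℤ)))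
      = (N : ℂ) * (f n * (starRingEnd ℂ) (f n)) := by
    intro n
    rw [Finset.sum_comm]
    have : ∀ n' : ZMod N,
        ∑ k ∈ Finset.range N, f n * (starRingEnd ℂ) (f n') * Ee N ((k : ℤ) * ((n'.val : ℤ) - (n.val : ℤ)))
        = f n * (starRingEnd ℂ) (f n') * (if n' = n then (N : ℂ) else 0) := by
      intro n'
      rw [← Finset.mul_sum, orth N hN]
      simp only [zmod_dvd_iff]
    rw [Finset.sum_congr rfl fun n' _ => this n']
    simp only [mul_ite, mul_zero, Finset.sum_ite_eq', Finset.mem_univ, if_true]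
    ring
  rw [Finset.sum_congr rfl fun n _ => inner n, ← Finset.mul_sum]

lemma step1 {N : ℕ} [NeZero N] (L : ℕ) (z W : ZMod N → ℂ) (m : ℕ) :
    ((∑ k ∈ Finset.range N, ‖stft L z W m k‖ ^ 2 : ℝ) : ℂ)
    = (N : ℂ)⁻¹ * ∑ n : ZMod N,
        ((‖z n‖ ^ 2 : ℝ) : ℂ) * ((‖W (((L * m : ℕ) : ZMod N) - n)‖ ^ 2 : ℝ) : ℂ) := by
  have hN : 0 < N := Nat.pos_of_ne_zero (NeZero.ne N)
  have hNC : (N : ℂ) ≠ 0 := Nat.cast_ne_zero.mpr hN.ne'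
  have h0 : ((∑ k ∈ Finset.range N, ‖stft L z W m k‖ ^ 2 : ℝ) : ℂ)
      = ∑ k ∈ Finset.range N, (stft L z W m k * (starRingEnd ℂ) (stft L z W m k)) := by
    push_cast
    exact Finset.sum_congr rfl fun k _ => by rw [← Complex.ofReal_pow, normsq_cast]
  rw [h0]
  have h1 : ∀ k ∈ Finset.range N,
      stft L z W m k * (starRingEnd ℂ) (stft L z W m k)
      = ((N : ℂ)⁻¹ * (N : ℂ)⁻¹) *
        ((∑ n : ZMod N, (fun n => z n * W (((L * m : ℕ) : ZMod N) - n)) n * Ee N (-((k : ℤ) * (n.val : ℤ)))) *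
         (starRingEnd ℂ) (∑ n : ZMod N, (fun n => z n * W (((L * m : ℕ) : ZMod N) - n)) n * Ee N (-((k : ℤ) * (n.val : ℤ))))) := by
    intro k _
    rw [stft_eq]
    rw [map_mul, map_inv₀, Complex.conj_natCast]
    ring
  rw [Finset.sum_congr rfl h1, ← Finset.mul_sum,
    parseval' (fun n => z n * W (((L * m : ℕ) : ZMod N) - n))]
  rw [← mul_assoc, mul_assoc ((N:ℂ)⁻¹) ((N:ℂ)⁻¹) ((N:ℂ)), inv_mul_cancel₀ hNC, mul_one]
  congr 1
  refine Finset.sum_congr rfl fun n _ => ?_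
  rw [normsq_cast, normsq_cast, map_mul]
  ring

/-- If every matrix `A_m = (β_r(m + jN/L))` has rank `L`, then the magnitudes of any
signal are uniquely determined by the magnitude measurements of its multiple-window STFT. -/
theorem stmt7 (N L R : ℕ) [NeZero N] (hL : 0 < L) (hR : 0 < R) (hdvd : L ∣ N)
    (w : Fin R → ZMod N → ℂ)
    (hrank : ∀ m < N / L,
      Matrix.rank (Matrix.of fun (r : Fin R) (j : Fin L) =>
        dftSq (w r) (m + j.1 * (N / L))) = L) :
    ∀ x y : ZMod N → ℂ,
      (∀ r : Fin R, ∀ m < N / L, ∀ k < N,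
        ‖stft L y (w r) m k‖ = ‖stft L x (w r) m k‖) →
      ∀ n : ZMod N, ‖y n‖ = ‖x n‖ := by
  intro x y hxy n
  have hN : 0 < N := Nat.pos_of_ne_zero (NeZero.ne N)
  have hNC : (N : ℂ) ≠ 0 := Nat.cast_ne_zero.mpr hN.ne'
  have hLC : (L : ℂ) ≠ 0 := Nat.cast_ne_zero.mpr hL.ne'
  have hQ : 0 < N / L := Nat.div_pos (Nat.le_of_dvd hN hdvd) hL
  -- For any signal z, the transformed measurement sum
  have hT : ∀ (z : ZMod N → ℂ) (r : Fin R) (p : ℕ),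
      ∑ m ∈ Finset.range (N / L),
        ((∑ k ∈ Finset.range N, ‖stft L z (w r) m k‖ ^ 2 : ℝ) : ℂ) *
          Ee N (-((p : ℤ) * ((L * m : ℕ) : ℤ)))
      = (N : ℂ) * (L : ℂ)⁻¹ * ∑ j ∈ Finset.range L,
          dftSq (w r) (p + j * (N / L)) * dftSq z (p + j * (N / L)) := by
    intro z r p
    have e1 : ∀ m ∈ Finset.range (N / L),
        ((∑ k ∈ Finset.range N, ‖stft L z (w r) m k‖ ^ 2 : ℝ) : ℂ) *
          Ee N (-((p : ℤ) * ((L * m : ℕ) : ℤ)))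
        = (N : ℂ)⁻¹ * ((∑ n' : ZMod N,
            (fun n' => ((‖z n'‖ ^ 2 : ℝ) : ℂ)) n' *
              (fun t => ((‖w r t‖ ^ 2 : ℝ) : ℂ)) (((L * m : ℕ) : ZMod N) - n')) *
            Ee N (-((p : ℤ) * ((L * m : ℕ) : ℤ)))) := by
      intro m _
      rw [step1]
      ring
    rw [Finset.sum_congr rfl e1, ← Finset.mul_sum]
    rw [step2 hL hdvd (fun t => ((‖w r t‖ ^ 2 : ℝ) : ℂ)) (fun n' => ((‖z n'‖ ^ 2 : ℝ) : ℂ)) p]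
    rw [Finset.mul_sum, Finset.mul_sum, Finset.mul_sum]
    refine Finset.sum_congr rfl fun j _ => ?_
    rw [dftSq_eq (w r) (p + j * (N / L)), dftSq_eq z (p + j * (N / L))]
    field_simp
  -- dftSq agree on all k < N
  have key : ∀ k, k < N → dftSq x k = dftSq y k := by
    intro k hk
    set p := k % (N / L) with hpdef
    set j := k / (N / L) with hjdef
    have hp : p < N / L := Nat.mod_lt _ hQ
    have hj : j < L := by
      rw [hjdef, Nat.div_lt_iff_lt_mul hQ]
      calc k < N := hk
      _ = L * (N / L) := (Nat.mul_div_cancel' hdvd).symm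
      _ = L * (N / L) := rfl
    have hkeq : k = p + j * (N / L) := (Nat.mod_add_div' k (N / L)).symm
    have hv0 : (fun j' : Fin L => dftSq x (p + j'.1 * (N / L)) - dftSq y (p + j'.1 * (N / L))) = 0 := by
      apply rank_inj _ (hrank p hp)
      funext r
      have hTx := hT x r p
      have hTy := hT y r p
      have hmeas : ∑ m ∈ Finset.range (N / L),
          ((∑ k' ∈ Finset.range N, ‖stft L y (w r) m k'‖ ^ 2 : ℝ) : ℂ) *
            Ee N (-((p : ℤ) * ((L * m : ℕ) : ℤ)))
          = ∑ m ∈ Finset.range (N / L),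
          ((∑ k' ∈ Finset.range N, ‖stft L x (w r) m k'‖ ^ 2 : ℝ) : ℂ) *
            Ee N (-((p : ℤ) * ((L * m : ℕ) : ℤ))) := by
        refine Finset.sum_congr rfl fun m hm => ?_
        rw [Finset.mem_range] at hm
        congr 2
        exact Finset.sum_congr rfl fun k' hk' => by
          rw [hxy r m hm k' (Finset.mem_range.mp hk')]
      have hsum : ∑ j' ∈ Finset.range L,
          dftSq (w r) (p + j' * (N / L)) * dftSq x (p + j' * (N / L))
          = ∑ j' ∈ Finset.range L,
          dftSq (w r) (p + j' * (N / L)) * dftSq y (p + j' * (N / L)) := by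
        apply mul_left_cancel₀ (mul_ne_zero hNC (inv_ne_zero hLC))
        rw [← hT x r p, ← hT y r p, hmeas]
      have : (Matrix.of fun (r : Fin R) (j' : Fin L) =>
          dftSq (w r) (p + j'.1 * (N / L))).mulVec
          (fun j' : Fin L => dftSq x (p + j'.1 * (N / L)) - dftSq y (p + j'.1 * (N / L))) r
          = ∑ j' ∈ Finset.range L,
            (dftSq (w r) (p + j' * (N / L)) * dftSq x (p + j' * (N / L)) -
             dftSq (w r) (p + j' * (N / L)) * dftSq y (p + j' * (N / L))) := by
        rw [Matrix.mulVec, dotProduct, ← Fin.sum_univ_eq_sum_range]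
        exact Finset.sum_congr rfl fun j' _ => by simp [Matrix.of_apply, mul_sub]
      rw [this, Finset.sum_sub_distrib, hsum, sub_self]
      rfl
    have := congrFun hv0 ⟨j, hj⟩
    simp only [Pi.zero_apply, sub_eq_zero] at this
    rw [hkeq]
    exact this
  -- invert the DFT
  have hinv : ((‖x n‖ ^ 2 : ℝ) : ℂ) = ((‖y n‖ ^ 2 : ℝ) : ℂ) := by
    have hx := inv_dft (fun n' => ((‖x n'‖ ^ 2 : ℝ) : ℂ)) n
    have hy := inv_dft (fun n' => ((‖y n'‖ ^ 2 : ℝ) : ℂ)) n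
    rw [← hx, ← hy]
    refine Finset.sum_congr rfl fun k hk => ?_
    rw [Finset.mem_range] at hk
    have hxk : ((N : ℂ)⁻¹ * ∑ n' : ZMod N,
        (fun n' => ((‖x n'‖ ^ 2 : ℝ) : ℂ)) n' * Ee N (-((k : ℤ) * (n'.val : ℤ)))) = dftSq x k :=
      (dftSq_eq x k).symm
    have hyk : ((N : ℂ)⁻¹ * ∑ n' : ZMod N,
        (fun n' => ((‖y n'‖ ^ 2 : ℝ) : ℂ)) n' * Ee N (-((k : ℤ) * (n'.val : ℤ)))) = dftSq y k :=
      (dftSq_eq y k).symm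
    rw [hxk, hyk, key k hk]
  have hreal : ‖x n‖ ^ 2 = ‖y n‖ ^ 2 := by exact_mod_cast hinv
  nlinarith [norm_nonneg (x n), norm_nonneg (y n)]
end

section
/- Let w be an N-periodic window with support in [a(w), a(w)+l(w)−1] + Nℤ, l(w) ≤ N/2 and l(w) ≥ 2, and let n_1 ≡ Lm − a(w), n_2 ≡ Lm − a(w) − l(w) + 1 (mod N) with x(n_1) ≠ 0 and x(n_2) ≠ 0. Then |Σ_{k=0}^{N−1} |X_w(Lm,k)|² e^{2πik(l(w)−1)/N}| ≥ (|w(a(w)) w(a(w)+l(w)−1)|/N) · min_{n ∈ V(x)} |x(n)|². -/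
lemma ortho (N : ℕ) [NeZero N] (t : ℤ) :
    ∑ k ∈ Finset.range N, Complex.exp (2 * Real.pi * Complex.I * (k : ℂ) * (t : ℂ) / (N : ℂ)) =
      if (t : ZMod N) = 0 then (N : ℂ) else 0 := by
  have hN : (N : ℂ) ≠ 0 := Nat.cast_ne_zero.mpr (NeZero.ne N)
  set ζ : ℂ := Complex.exp (2 * Real.pi * Complex.I * (t : ℂ) / (N : ℂ)) with hζ
  have hpow : ∀ k : ℕ, Complex.exp (2 * Real.pi * Complex.I * (k : ℂ) * (t : ℂ) / (N : ℂ)) = ζ ^ k := by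
    intro k
    rw [hζ, ← Complex.exp_nat_mul]
    ring_nf
  rw [Finset.sum_congr rfl fun k _ => hpow k]
  by_cases hdvd : (t : ZMod N) = 0
  · obtain ⟨s, hs⟩ := (ZMod.intCast_zmod_eq_zero_iff_dvd t N).mp hdvd
    have : ζ = 1 := by
      rw [hζ, hs]
      have : 2 * (Real.pi:ℂ) * Complex.I * ((N:ℤ) * s : ℤ) / (N : ℂ) = s * (2 * Real.pi * Complex.I) := by
        push_cast
        field_simp
      rw [this, Complex.exp_int_mul_two_pi_mul_I]
    simp [this, hdvd]
  · have hζN : ζ ^ N = 1 := by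
      rw [hζ, ← Complex.exp_nat_mul]
      have : (N : ℂ) * (2 * Real.pi * Complex.I * (t : ℂ) / (N : ℂ)) = t * (2 * Real.pi * Complex.I) := by
        field_simp
      rw [this, Complex.exp_int_mul_two_pi_mul_I]
    have hζ1 : ζ ≠ 1 := by
      intro h
      rw [hζ, Complex.exp_eq_one_iff] at h
      obtain ⟨n, hn⟩ := h
      have hπ : (Real.pi : ℂ) ≠ 0 := Complex.ofReal_ne_zero.mpr Real.pi_ne_zero
      have hI := Complex.I_ne_zero
      have ht : (t : ℂ) = (n : ℂ) * N := by
        have h2 : (2 : ℂ) * Real.pi * Complex.I ≠ 0 := by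
          simp [hπ, Complex.I_ne_zero]
        field_simp at hn
        apply mul_left_cancel₀ h2
        linear_combination (2 * Real.pi * Complex.I) * hn
      have : t = n * N := by exact_mod_cast ht
      exact hdvd (by simp [this])
    rw [geom_sum_eq hζ1, hζN]
    simp [hdvd]

lemma sum_reduce (N : ℕ) [NeZero N] (y : ZMod N → ℂ) (c : ℕ) :
    ∑ k ∈ Finset.range N,
      (((N : ℂ)⁻¹ * ∑ n : ZMod N, y n *
          Complex.exp (-(2 * Real.pi * Complex.I * (k : ℂ) * (n.val : ℂ)) / (N : ℂ))) *
        (starRingEnd ℂ) ((N : ℂ)⁻¹ * ∑ n : ZMod N, y n *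
          Complex.exp (-(2 * Real.pi * Complex.I * (k : ℂ) * (n.val : ℂ)) / (N : ℂ)))) *
        Complex.exp (2 * Real.pi * Complex.I * (k : ℂ) * (c : ℂ) / (N : ℂ)) =
      (N : ℂ)⁻¹ * ∑ n' : ZMod N, y (n' + (c : ZMod N)) * (starRingEnd ℂ) (y n') := by
  have hN : (N : ℂ) ≠ 0 := Nat.cast_ne_zero.mpr (NeZero.ne N)
  have step1 : ∀ k : ℕ,
      (((N : ℂ)⁻¹ * ∑ n : ZMod N, y n *
          Complex.exp (-(2 * Real.pi * Complex.I * (k : ℂ) * (n.val : ℂ)) / (N : ℂ))) *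
        (starRingEnd ℂ) ((N : ℂ)⁻¹ * ∑ n : ZMod N, y n *
          Complex.exp (-(2 * Real.pi * Complex.I * (k : ℂ) * (n.val : ℂ)) / (N : ℂ)))) *
        Complex.exp (2 * Real.pi * Complex.I * (k : ℂ) * (c : ℂ) / (N : ℂ)) =
      (N : ℂ)⁻¹ * (N : ℂ)⁻¹ * ∑ n' : ZMod N, ∑ n : ZMod N,
        y n * (starRingEnd ℂ) (y n') *
          Complex.exp (2 * Real.pi * Complex.I * (k : ℂ) *
            (((n'.val : ℤ) - (n.val : ℤ) + (c : ℤ) : ℤ) : ℂ) / (N : ℂ)) := by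
    intro k
    rw [map_mul, map_sum]
    have hconj : ∀ n : ZMod N,
        (starRingEnd ℂ) (y n *
          Complex.exp (-(2 * Real.pi * Complex.I * (k : ℂ) * (n.val : ℂ)) / (N : ℂ))) =
        (starRingEnd ℂ) (y n) *
          Complex.exp ((2 * Real.pi * Complex.I * (k : ℂ) * (n.val : ℂ)) / (N : ℂ)) := by
      intro n
      rw [map_mul, ← Complex.exp_conj]
      congr 2
      simp only [map_div₀, map_neg, map_mul, Complex.conj_I, Complex.conj_ofReal,
        Complex.conj_natCast, map_ofNat]
      ring
    rw [Finset.sum_congr rfl fun n _ => hconj n]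
    rw [map_inv₀, Complex.conj_natCast]
    rw [show ∀ A B E : ℂ, ((N:ℂ)⁻¹ * A) * ((N:ℂ)⁻¹ * B) * E = (N:ℂ)⁻¹ * (N:ℂ)⁻¹ * (A * B * E)
      from fun A B E => by ring]
    congr 1
    rw [Finset.sum_mul_sum, Finset.sum_mul]
    rw [← Finset.sum_comm]
    apply Finset.sum_congr rfl
    intro n' _
    rw [Finset.sum_mul]
    apply Finset.sum_congr rfl
    intro n _
    rw [show ∀ (u v e1 e2 e3 : ℂ), u * Complex.exp e1 * (v * Complex.exp e2) * Complex.exp e3 =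
        u * v * Complex.exp (e1 + e2 + e3) from fun u v e1 e2 e3 => by
      rw [Complex.exp_add, Complex.exp_add]; ring]
    congr 1
    push_cast
    ring
  rw [Finset.sum_congr rfl fun k _ => step1 k]
  rw [← Finset.mul_sum, Finset.sum_comm]
  have step2 : ∀ n' : ZMod N, ∑ k ∈ Finset.range N, ∑ n : ZMod N,
      y n * (starRingEnd ℂ) (y n') *
        Complex.exp (2 * Real.pi * Complex.I * (k : ℂ) *
          (((n'.val : ℤ) - (n.val : ℤ) + (c : ℤ) : ℤ) : ℂ) / (N : ℂ)) =
      y (n' + (c : ZMod N)) * (starRingEnd ℂ) (y n') * N := by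
    intro n'
    rw [Finset.sum_comm]
    have : ∀ n : ZMod N, ∑ k ∈ Finset.range N,
        y n * (starRingEnd ℂ) (y n') *
          Complex.exp (2 * Real.pi * Complex.I * (k : ℂ) *
            (((n'.val : ℤ) - (n.val : ℤ) + (c : ℤ) : ℤ) : ℂ) / (N : ℂ)) =
        if n = n' + (c : ZMod N) then y n * (starRingEnd ℂ) (y n') * N else 0 := by
      intro n
      rw [← Finset.mul_sum, ortho N ((n'.val : ℤ) - (n.val : ℤ) + (c : ℤ))]
      have hiff : (((n'.val : ℤ) - (n.val : ℤ) + (c : ℤ) : ℤ) : ZMod N) = 0 ↔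
          n = n' + (c : ZMod N) := by
        push_cast [ZMod.natCast_val, ZMod.cast_id]
        rw [sub_add_eq_add_sub, sub_eq_zero, eq_comm]
      by_cases h : n = n' + (c : ZMod N)
      · rw [if_pos (hiff.mpr h), if_pos h]
      · rw [if_neg (fun hh => h (hiff.mp hh)), if_neg h, mul_zero]
    rw [Finset.sum_congr rfl fun n _ => this n, Finset.sum_ite_eq' Finset.univ]
    simp
  rw [Finset.sum_congr rfl fun n' _ => step2 n']
  rw [← Finset.sum_mul]
  field_simp

open scoped Classical in
/-- Lower bound
`|∑_k |X_w(Lm,k)|² e^{2πik(l-1)/N}| ≥ (|w(a)w(a+l-1)|/N) · min_{n ∈ V(x)} |x(n)|²`. -/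
theorem stmt18 (N L : ℕ) [NeZero N] (hL : 0 < L) (hdvd : L ∣ N)
    (w : ZMod N → ℂ) (a : ZMod N) (l : ℕ)
    (hl2 : 2 ≤ l) (hlN : l ≤ N / 2)
    (ha : w a ≠ 0) (hb : w (a + ((l - 1 : ℕ) : ZMod N)) ≠ 0)
    (hsupp : ∀ n : ZMod N, (∀ j < l, n ≠ a + (j : ZMod N)) → w n = 0)
    (x : ZMod N → ℂ) (m : ℕ) (hm : m < N / L)
    (hx1 : x (((L * m : ℕ) : ZMod N) - a) ≠ 0)
    (hx2 : x (((L * m : ℕ) : ZMod N) - a - ((l - 1 : ℕ) : ZMod N)) ≠ 0)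
    (hVne : (Finset.univ.filter fun n : ZMod N => x n ≠ 0).Nonempty) :
    ‖∑ k ∈ Finset.range N, ((‖stft L x w m k‖ ^ 2 : ℝ) : ℂ) *
        Complex.exp (2 * Real.pi * Complex.I * (k : ℂ) * ((l - 1 : ℕ) : ℂ) / (N : ℂ))‖ ≥
      ‖w a * w (a + ((l - 1 : ℕ) : ZMod N))‖ / N *
        ((Finset.univ.filter fun n : ZMod N => x n ≠ 0).inf' hVne fun n => ‖x n‖ ^ 2) := by
  have hN : 0 < N := Nat.pos_of_ne_zero (NeZero.ne N)
  have h2l : 2 * l ≤ N := by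
    have := (Nat.le_div_iff_mul_le (by norm_num : 0 < 2)).mp hlN
    omega
  set M : ZMod N := ((L * m : ℕ) : ZMod N) with hM
  set c : ℕ := l - 1 with hc
  set y : ZMod N → ℂ := fun n => x n * w (M - n) with hy
  have hsq : ∀ k : ℕ, ((‖stft L x w m k‖ ^ 2 : ℝ) : ℂ) =
      stft L x w m k * (starRingEnd ℂ) (stft L x w m k) := by
    intro k
    rw [Complex.mul_conj, Complex.normSq_eq_norm_sq]
  have hstft : ∀ k : ℕ, stft L x w m k = (N : ℂ)⁻¹ * ∑ n : ZMod N, y n *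
      Complex.exp (-(2 * Real.pi * Complex.I * (k : ℂ) * (n.val : ℂ)) / (N : ℂ)) := fun k => rfl
  have key : ∑ k ∈ Finset.range N, ((‖stft L x w m k‖ ^ 2 : ℝ) : ℂ) *
        Complex.exp (2 * Real.pi * Complex.I * (k : ℂ) * ((l - 1 : ℕ) : ℂ) / (N : ℂ)) =
      (N : ℂ)⁻¹ * ∑ n' : ZMod N, y (n' + ((c : ℕ) : ZMod N)) * (starRingEnd ℂ) (y n') := by
    rw [← sum_reduce N y c]
    apply Finset.sum_congr rfl
    intro k _
    rw [hsq k, hstft k]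
  have hwsupp : ∀ u : ZMod N, w u ≠ 0 → ∃ j, j < l ∧ u = a + (j : ZMod N) := by
    intro u hu
    by_contra h
    push_neg at h
    exact hu (hsupp u h)
  have hsingle : ∑ n' : ZMod N, y (n' + ((c : ℕ) : ZMod N)) * (starRingEnd ℂ) (y n') =
      y (M - a) * (starRingEnd ℂ) (y (M - a - ((c : ℕ) : ZMod N))) := by
    rw [Finset.sum_eq_single (M - a - ((c : ℕ) : ZMod N))]
    · rw [sub_add_cancel]
    · intro n' _ hne
      by_contra h0
      have hy1 : y (n' + ((c : ℕ) : ZMod N)) ≠ 0 := fun h => h0 (by rw [h, zero_mul])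
      have hy2 : y n' ≠ 0 := fun h => h0 (by rw [h, map_zero, mul_zero])
      have hw1 : w (M - (n' + ((c : ℕ) : ZMod N))) ≠ 0 := by
        intro h
        exact hy1 (by rw [hy]; simp only; rw [h, mul_zero])
      have hw2 : w (M - n') ≠ 0 := by
        intro h
        exact hy2 (by rw [hy]; simp only; rw [h, mul_zero])
      obtain ⟨j, hj, hju⟩ := hwsupp _ hw1
      obtain ⟨j', hj', hju'⟩ := hwsupp _ hw2
      have hcomb : ((j + c : ℕ) : ZMod N) = ((j' : ℕ) : ZMod N) := by
        have h1 : M - n' - ((c : ℕ) : ZMod N) = a + (j : ZMod N) := by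
          rw [← hju]; ring
        rw [hju'] at h1
        push_cast
        linear_combination -h1
      have hjc : j + c = j' := by
        have := congrArg ZMod.val hcomb
        rwa [ZMod.val_natCast_of_lt (by omega), ZMod.val_natCast_of_lt (by omega)] at this
      have hj0 : j = 0 := by omega
      have hj'c : j' = c := by omega
      apply hne
      have : M - n' = a + ((c : ℕ) : ZMod N) := by
        rw [hju', hj'c]
      have h2 : n' = M - (a + ((c : ℕ) : ZMod N)) := by
        linear_combination -this
      rw [h2]; ring
    · intro h
      exact absurd (Finset.mem_univ _) h
  have hcz : ((c : ℕ) : ZMod N) = ((l - 1 : ℕ) : ZMod N) := rfl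
  have hy1v : y (M - a) = x (M - a) * w a := by
    rw [hy]; simp only; rw [sub_sub_cancel]
  have hy2v : y (M - a - ((c : ℕ) : ZMod N)) =
      x (M - a - ((c : ℕ) : ZMod N)) * w (a + ((c : ℕ) : ZMod N)) := by
    rw [hy]; simp only
    congr 2
    ring
  rw [key, hsingle, hy1v, hy2v]
  rw [norm_mul, norm_mul, norm_mul, RCLike.norm_conj, norm_mul, norm_inv]
  rw [Complex.norm_natCast]
  set μ : ℝ := (Finset.univ.filter fun n : ZMod N => x n ≠ 0).inf' hVne fun n => ‖x n‖ ^ 2 with hμ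
  have hμ1 : μ ≤ ‖x (M - a)‖ ^ 2 :=
    Finset.inf'_le _ (by simp only [Finset.mem_filter, Finset.mem_univ, true_and]; exact hx1)
  have hμ2 : μ ≤ ‖x (M - a - ((c : ℕ) : ZMod N))‖ ^ 2 :=
    Finset.inf'_le _ (by simp only [Finset.mem_filter, Finset.mem_univ, true_and]; exact hx2)
  have hμ0 : 0 ≤ μ := Finset.le_inf' hVne _ (fun b _ => sq_nonneg _)
  have hprod : μ ≤ ‖x (M - a)‖ * ‖x (M - a - ((c : ℕ) : ZMod N))‖ := by
    rcases le_total ‖x (M - a)‖ ‖x (M - a - ((c : ℕ) : ZMod N))‖ with h | h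
    · calc μ ≤ ‖x (M - a)‖ ^ 2 := hμ1
        _ = ‖x (M - a)‖ * ‖x (M - a)‖ := sq ‖x (M - a)‖
        _ ≤ ‖x (M - a)‖ * ‖x (M - a - ((c : ℕ) : ZMod N))‖ :=
          mul_le_mul_of_nonneg_left h (norm_nonneg _)
    · calc μ ≤ ‖x (M - a - ((c : ℕ) : ZMod N))‖ ^ 2 := hμ2
        _ = ‖x (M - a - ((c : ℕ) : ZMod N))‖ * ‖x (M - a - ((c : ℕ) : ZMod N))‖ :=
          sq ‖x (M - a - ((c : ℕ) : ZMod N))‖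
        _ ≤ ‖x (M - a)‖ * ‖x (M - a - ((c : ℕ) : ZMod N))‖ :=
          mul_le_mul_of_nonneg_right h (norm_nonneg _)
  rw [ge_iff_le, norm_mul, hcz]
  have hNpos : (0 : ℝ) < N := by exact_mod_cast hN
  calc ‖w a‖ * ‖w (a + ((l - 1 : ℕ) : ZMod N))‖ / N * μ
      ≤ ‖w a‖ * ‖w (a + ((l - 1 : ℕ) : ZMod N))‖ / N *
        (‖x (M - a)‖ * ‖x (M - a - ((c : ℕ) : ZMod N))‖) := by
        apply mul_le_mul_of_nonneg_left hprod
        positivity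
    _ = (N : ℝ)⁻¹ * (‖x (M - a)‖ * ‖w a‖ *
        (‖x (M - a - ((c : ℕ) : ZMod N))‖ * ‖w (a + ((l - 1 : ℕ) : ZMod N))‖)) := by
        rw [hcz]; field_simp
end
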